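/- Let s ∈ S_n and suppose x ∈ X^n is constant on each orbit of s, with value x_q on orbit ω_q. Then the sign τ(s,x) = (-1)^{#inversions of s among negative positions} equals ∏_{q : x_q < 0} (-1)^{#ω_q - 1}. -/

import Mathlib

open Equiv Finset

private theorem my_sign_eq_signAux {m : ℕ} (u : Equiv.Perm (Fin m)) :
    Equiv.Perm.sign u = Equiv.Perm.signAux u := by
  refine Equiv.Perm.swap_induction_on u ?_ ?_
  · rw [Equiv.Perm.sign_one, Equiv.Perm.signAux_one]
  · intro g a b hab ih
    rw [Equiv.Perm.sign_mul, Equiv.Perm.signAux_mul, ih, Equiv.Perm.sign_swap hab,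
      Equiv.Perm.signAux_swap hab]

private theorem my_sign_eq_pow {m : ℕ} (u : Equiv.Perm (Fin m)) :
    ((Equiv.Perm.sign u : ℤˣ) : ℤ)
      = (-1) ^ (Finset.univ.filter fun q : Fin m × Fin m =>
          q.1 < q.2 ∧ u q.2 < u q.1).card := by
  rw [my_sign_eq_signAux]
  unfold Equiv.Perm.signAux
  rw [Finset.prod_ite, Finset.prod_const, Finset.prod_const, one_pow, mul_one]
  have hc : ((Equiv.Perm.finPairsLT m).filter fun a => u a.1 ≤ u a.2).card
      = (Finset.univ.filter fun q : Fin m × Fin m =>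
          q.1 < q.2 ∧ u q.2 < u q.1).card := by
    refine Finset.card_bij' (fun a _ => (a.2, a.1)) (fun b _ => ⟨b.2, b.1⟩) ?_ ?_ ?_ ?_
    · intro a ha
      rw [Finset.mem_filter, Equiv.Perm.mem_finPairsLT] at ha
      rw [Finset.mem_filter]
      refine ⟨Finset.mem_univ _, ha.1, lt_of_le_of_ne ha.2 fun h => ?_⟩
      exact (ne_of_lt ha.1) (u.injective h).symm
    · intro b hb
      rw [Finset.mem_filter] at hb
      rw [Finset.mem_filter, Equiv.Perm.mem_finPairsLT]
      exact ⟨hb.2.1, le_of_lt hb.2.2⟩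
    · intro a _; rfl
    · intro a _; rfl
  rw [hc]
  simp

private theorem aux3 {α : Type*} [Fintype α] [DecidableEq α] {p : α → Prop} [DecidablePred p]
    (σ : Equiv.Perm α) :
    ∀ hp : ∀ i, p i ↔ p (σ i),
    ((Equiv.Perm.sign (σ.subtypePerm (fun i => (hp i).symm)) : ℤˣ) : ℤ)
      = ∏ c ∈ σ.cycleFactorsFinset,
          (if ∀ i ∈ c.support, p i then (-1 : ℤ) ^ (c.support.card - 1) else 1) := by
  induction σ using Equiv.Perm.cycle_induction_on with
  | base_one =>
    intro hp
    have h1 : Equiv.Perm.subtypePerm 1 (fun i => (hp i).symm) = 1 := Equiv.ext fun _ => Subtype.ext rfl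
    rw [h1, Equiv.Perm.sign_one, Equiv.Perm.cycleFactorsFinset_one, Finset.prod_empty]
    rfl
  | base_cycles σ hσ =>
    intro hp
    by_cases hall : ∀ i ∈ σ.support, p i
    · rw [hσ.cycleFactorsFinset_eq_singleton, Finset.prod_singleton, if_pos hall,
        Equiv.Perm.sign_subtypePerm σ (fun i => (hp i).symm)
          (fun a ha => hall a (Equiv.Perm.mem_support.2 ha)), hσ.sign]
      obtain ⟨k, hk⟩ : ∃ k, σ.support.card = k + 2 :=
        ⟨σ.support.card - 2, by have := hσ.two_le_card_support; omega⟩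
      rw [hk]
      push_cast
      simp [pow_succ]
    · push_neg at hall
      obtain ⟨i, hi, hpi⟩ := hall
      have hinv : ∀ (k : ℕ) (j : α), p ((σ ^ k) j) ↔ p j := by
        intro k
        induction k with
        | zero => simp
        | succ k ih =>
          intro j
          rw [pow_succ, Equiv.Perm.mul_apply]
          exact (ih (σ j)).trans (hp j).symm
      have h1 : σ.subtypePerm (fun i => (hp i).symm) = 1 := by
        ext j
        show σ (j : α) = (j : α)
        by_contra hne
        obtain ⟨k, hk⟩ := hσ.exists_pow_eq (Equiv.Perm.mem_support.1 hi) hne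
        exact hpi ((hinv k i).mp (by rw [hk]; exact j.2))
      rw [h1, Equiv.Perm.sign_one, hσ.cycleFactorsFinset_eq_singleton, Finset.prod_singleton,
        if_neg (by push_neg; exact ⟨i, hi, hpi⟩)]
      rfl
  | induction_disjoint σ τ hdisj hσ ihσ ihτ =>
    intro hp
    have hpσ : ∀ i, p i ↔ p (σ i) := by
      intro i
      rcases hdisj i with h | h
      · rw [h]
      · have := hp i
        rwa [Equiv.Perm.mul_apply, h] at this
    have hpτ : ∀ i, p i ↔ p (τ i) := by
      intro i
      by_cases hti : τ i = i
      · rw [hti]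
      · have h2 : σ (τ i) = τ i := by
          rcases hdisj (τ i) with h | h
          · exact h
          · exact absurd (τ.injective h) hti
        have := hp i
        rwa [Equiv.Perm.mul_apply, h2] at this
    have hmul : (σ * τ).subtypePerm (fun i => (hp i).symm) = σ.subtypePerm (fun i => (hpσ i).symm) * τ.subtypePerm (fun i => (hpτ i).symm) :=
      Equiv.ext fun _ => rfl
    rw [hmul, Equiv.Perm.sign_mul, hdisj.cycleFactorsFinset_mul_eq_union,
      Finset.prod_union hdisj.disjoint_cycleFactorsFinset, Units.val_mul,
      ihσ hpσ, ihτ hpτ]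

theorem stmt_19 {X : Type*} (n : ℕ) (neg : X → Bool)
    (s : Equiv.Perm (Fin n)) (x : Fin n → X)
    (hconst : ∀ i, x (s i) = x i) :
    ((-1 : ℤ) ^ (Finset.univ.filter fun p : Fin n × Fin n =>
        p.1 < p.2 ∧ neg (x p.1) ∧ neg (x p.2) ∧ s p.2 < s p.1).card)
      = ∏ c ∈ s.cycleFactorsFinset,
          (if ∀ i ∈ c.support, neg (x i) then (-1 : ℤ) ^ (c.support.card - 1) else 1) := by
  classical
  set p : Fin n → Prop := fun i => neg (x i) = true with hpdef
  have hp : ∀ i, p i ↔ p (s i) := fun i => by simp [p, hconst i]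
  set m := Fintype.card {i // p i} with hm
  let e : {i // p i} ≃o Fin m := (monoEquivOfFin _ rfl).symm
  let u : Equiv.Perm (Fin m) := e.toEquiv.permCongr (s.subtypePerm (fun i => (hp i).symm))
  have hu : ∀ a : {i // p i}, u (e a) = e ⟨s a, (hp a).1 a.2⟩ := by
    intro a
    simp [u, Equiv.permCongr_apply, Equiv.Perm.subtypePerm_apply]
  have hcard : (Finset.univ.filter fun q : Fin n × Fin n =>
        q.1 < q.2 ∧ neg (x q.1) ∧ neg (x q.2) ∧ s q.2 < s q.1).card
      = (Finset.univ.filter fun q : Fin m × Fin m => q.1 < q.2 ∧ u q.2 < u q.1).card := by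
    refine Finset.card_bij'
      (fun a ha => (e ⟨a.1, (Finset.mem_filter.1 ha).2.2.1⟩,
                    e ⟨a.2, (Finset.mem_filter.1 ha).2.2.2.1⟩))
      (fun b _ => ((e.symm b.1 : Fin n), (e.symm b.2 : Fin n))) ?_ ?_ ?_ ?_
    · intro a ha
      obtain ⟨-, h1, h2, h3, h4⟩ := Finset.mem_filter.1 ha
      rw [Finset.mem_filter]
      refine ⟨Finset.mem_univ _, ?_, ?_⟩
      · rw [e.lt_iff_lt]; exact Subtype.mk_lt_mk.mpr h1
      · rw [hu, hu, e.lt_iff_lt]; exact Subtype.mk_lt_mk.mpr h4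
    · intro b hb
      obtain ⟨-, h1, h2⟩ := Finset.mem_filter.1 hb
      rw [Finset.mem_filter]
      refine ⟨Finset.mem_univ _, ?_, (e.symm b.1).2, (e.symm b.2).2, ?_⟩
      · rw [← e.apply_symm_apply b.1, ← e.apply_symm_apply b.2, e.lt_iff_lt] at h1
        exact Subtype.coe_lt_coe.mpr h1
      · have hb1 := hu (e.symm b.1)
        have hb2 := hu (e.symm b.2)
        rw [e.apply_symm_apply] at hb1 hb2
        rw [hb1, hb2, e.lt_iff_lt] at h2
        exact Subtype.mk_lt_mk.mp h2
    · intro a ha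
      simp [e.symm_apply_apply]
    · intro b hb
      simp [Subtype.coe_eta, e.apply_symm_apply]
  rw [hcard, ← my_sign_eq_pow]
  have hsign : Equiv.Perm.sign u = Equiv.Perm.sign (s.subtypePerm (fun i => (hp i).symm)) :=
    Equiv.Perm.sign_permCongr e.toEquiv _
  rw [hsign, aux3 s hp]
  refine Finset.prod_congr rfl fun c _ => ?_
  by_cases h : ∀ i ∈ c.support, p i
  · rw [if_pos h, if_pos h]
  · rw [if_neg h, if_neg h]
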